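/- (Conductor-based policy improvement inequality) Let a finite discounted MDP with initial distribution d₀ be given, let K ≥ 1, and let (w, π) and (w̄, π̄) be two conductor-based policies in which all conditional probability mass functions w(s,·), w̄(s,·), π_j(s,·), π̄_j(s,·) are strictly positive. Let μ and μ̄ be the induced joint policies, i.e. μ(s,a) = ∑_{j} w(s,j) · π_j(s,a) and μ̄(s,a) = ∑_{j} w̄(s,j) · π̄_j(s,a). Set C := 4 γ (max_{s,a} |A_μ(s,a)|) / (1 − γ)². Then J(μ̄) ≥ J(μ) + ∑_{s} ρ_μ(s) · [ ∑_{j} w̄(s,j) · A_μ(j | s) − C · max_{s'} D_KL(w(s',·), w̄(s',·)) + ∑_{j} w̄(s,j) ∑_{a} π̄_j(s,a) · A_μ(a | s, j) − C · max_{s'} ∑_{j} w(s',j) · D_KL(π_j(s',·), π̄_j(s',·)) ]. -/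

import Mathlib

open Finset
set_option linter.unusedSectionVars false
set_option linter.unusedVariables false
set_option maxHeartbeats 1000000

noncomputable section

variable {S 𝒜 : Type*}

/-- The Kullback–Leibler divergence between two positive probability mass
functions on a finite type. -/
def KL {X : Type*} [Fintype X] (p q : X → ℝ) : ℝ :=
  ∑ x, p x * Real.log (p x / q x)

/-- The state-distribution sequence generated by policy `μ` from the initial
distribution `d₀` in the MDP with transition function `P`. -/
def dseq [Fintype S] [Fintype 𝒜] (P : S → 𝒜 → S → ℝ) (μ : S → 𝒜 → ℝ)
    (d₀ : S → ℝ) : ℕ → S → ℝ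
  | 0 => d₀
  | t + 1 => fun s' => ∑ s, ∑ a, dseq P μ d₀ t s * μ s a * P s a s'

/-- The expected discounted return of policy `μ` from initial distribution `d₀`,
in the MDP with transitions `P`, rewards `r` and discount `γ`. -/
def Jret [Fintype S] [Fintype 𝒜] (P : S → 𝒜 → S → ℝ) (r : S → 𝒜 → ℝ) (γ : ℝ)
    (μ : S → 𝒜 → ℝ) (d₀ : S → ℝ) : ℝ :=
  ∑' t : ℕ, γ ^ t * ∑ s, ∑ a, dseq P μ d₀ t s * μ s a * r s a

/-- The value function of `μ`: the return from the Dirac mass at `s`. -/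
def Vfun [Fintype S] [Fintype 𝒜] [DecidableEq S] (P : S → 𝒜 → S → ℝ)
    (r : S → 𝒜 → ℝ) (γ : ℝ) (μ : S → 𝒜 → ℝ) (s : S) : ℝ :=
  Jret P r γ μ (fun s' => if s' = s then 1 else 0)

/-- The state-action value function of `μ`. -/
def Qfun [Fintype S] [Fintype 𝒜] [DecidableEq S] (P : S → 𝒜 → S → ℝ)
    (r : S → 𝒜 → ℝ) (γ : ℝ) (μ : S → 𝒜 → ℝ) (s : S) (a : 𝒜) : ℝ :=
  r s a + γ * ∑ s', P s a s' * Vfun P r γ μ s'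

/-- The advantage function of `μ`. -/
def Adv [Fintype S] [Fintype 𝒜] [DecidableEq S] (P : S → 𝒜 → S → ℝ)
    (r : S → 𝒜 → ℝ) (γ : ℝ) (μ : S → 𝒜 → ℝ) (s : S) (a : 𝒜) : ℝ :=
  Qfun P r γ μ s a - Vfun P r γ μ s

/-- The (unnormalized) discounted state-visitation measure `ρ_μ`. -/
def rho [Fintype S] [Fintype 𝒜] (P : S → 𝒜 → S → ℝ) (μ : S → 𝒜 → ℝ)
    (d₀ : S → ℝ) (γ : ℝ) (s : S) : ℝ :=
  ∑' t : ℕ, γ ^ t * dseq P μ d₀ t s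


section AuxAnalysis

lemma log_ge_aux {x : ℝ} (hx : 0 < x) : 2 - 2 / Real.sqrt x ≤ Real.log x := by
  have hs : 0 < Real.sqrt x := Real.sqrt_pos.2 hx
  have h := Real.log_le_sub_one_of_pos (x := (Real.sqrt x)⁻¹) (by positivity)
  rw [Real.log_inv, Real.log_sqrt hx.le] at h
  rw [div_eq_mul_inv]
  linarith

lemma ptwise {a b : ℝ} (ha : 0 < a) (hb : 0 < b) :
    (a - b) ^ 2 ≤ 2 * (a + b) * (a * Real.log (a / b) - a + b) := by
  have hx : (0:ℝ) < Real.sqrt a := Real.sqrt_pos.2 ha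
  have hy : (0:ℝ) < Real.sqrt b := Real.sqrt_pos.2 hb
  set x := Real.sqrt a with hxdef
  set y := Real.sqrt b with hydef
  have hxa : x ^ 2 = a := Real.sq_sqrt ha.le
  have hyb : y ^ 2 = b := Real.sq_sqrt hb.le
  have hab : a / b = (x / y) ^ 2 := by
    rw [div_pow, hxa, hyb]
  have hlog : Real.log (a / b) = 2 * Real.log (x / y) := by
    rw [hab, ← Real.rpow_natCast (x/y) 2, Real.log_rpow (by positivity)]
    push_cast; ring
  have h1 : Real.log (y / x) ≤ y / x - 1 := Real.log_le_sub_one_of_pos (by positivity)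
  have h2 : Real.log (x / y) = - Real.log (y / x) := by
    rw [← Real.log_inv]; congr 1; field_simp
  have hlb : 1 - y / x ≤ Real.log (x / y) := by rw [h2]; linarith
  -- a * log(a/b) ≥ 2 x^2 - 2 x y
  have h3 : 2 * x ^ 2 - 2 * x * y ≤ a * Real.log (a / b) := by
    have := mul_le_mul_of_nonneg_left hlb ha.le
    rw [hlog]
    have hxy : a * (1 - y / x) = x ^ 2 - x * y := by
      rw [← hxa]; field_simp
    nlinarith [this, hxy]
  have h4 : (x - y) ^ 2 ≤ a * Real.log (a / b) - a + b := by nlinarith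
  have h5 : (a - b) ^ 2 ≤ 2 * (a + b) * (x - y) ^ 2 := by
    have : a - b = (x - y) * (x + y) := by rw [← hxa, ← hyb]; ring
    rw [this]
    have h6 : (x + y) ^ 2 ≤ 2 * (x ^ 2 + y ^ 2) := by nlinarith [sq_nonneg (x - y)]
    calc ((x - y) * (x + y)) ^ 2 = (x - y) ^ 2 * (x + y) ^ 2 := by ring
      _ ≤ (x - y) ^ 2 * (2 * (x ^ 2 + y ^ 2)) := by
          exact mul_le_mul_of_nonneg_left h6 (sq_nonneg _)
      _ = 2 * (a + b) * (x - y) ^ 2 := by rw [hxa, hyb]; ring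
  nlinarith [h4, h5, sq_nonneg (x - y), add_pos ha hb]

lemma pinsker {X : Type*} [Fintype X] (p q : X → ℝ) (hp : ∀ x, 0 < p x)
    (hq : ∀ x, 0 < q x) (hp1 : ∑ x, p x = 1) (hq1 : ∑ x, q x = 1) :
    (∑ x, |p x - q x|) ^ 2 ≤ 4 * KL p q := by
  set f : X → ℝ := fun x => |p x - q x| / Real.sqrt (2 * (p x + q x)) with hf
  set g : X → ℝ := fun x => Real.sqrt (2 * (p x + q x)) with hgdef
  have hgpos : ∀ x, 0 < g x := fun x => Real.sqrt_pos.2 (by have := hp x; have := hq x; linarith)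
  have hfg : ∀ x, f x * g x = |p x - q x| := by
    intro x
    rw [hf]; exact div_mul_cancel₀ _ (hgpos x).ne'
  have h1 : (∑ x, f x * g x) ^ 2 ≤ (∑ x, f x ^ 2) * ∑ x, g x ^ 2 :=
    Finset.sum_mul_sq_le_sq_mul_sq _ _ _
  have h2 : ∑ x, g x ^ 2 = 4 := by
    have : ∀ x, g x ^ 2 = 2 * (p x + q x) := by
      intro x
      rw [hgdef]
      exact Real.sq_sqrt (by have := hp x; have := hq x; linarith)
    rw [Finset.sum_congr rfl fun x _ => this x]
    rw [← Finset.mul_sum, Finset.sum_add_distrib, hp1, hq1]; norm_num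
  have h3 : ∑ x, f x ^ 2 ≤ KL p q := by
    have key : ∀ x, f x ^ 2 ≤ p x * Real.log (p x / q x) - p x + q x := by
      intro x
      have hposd : (0:ℝ) < 2 * (p x + q x) := by have := hp x; have := hq x; linarith
      have : f x ^ 2 = (p x - q x) ^ 2 / (2 * (p x + q x)) := by
        rw [hf, div_pow, sq_abs, Real.sq_sqrt hposd.le]
      rw [this, div_le_iff₀ hposd]
      have := ptwise (hp x) (hq x)
      linarith
    calc ∑ x, f x ^ 2 ≤ ∑ x, (p x * Real.log (p x / q x) - p x + q x) :=
          Finset.sum_le_sum fun x _ => key x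
      _ = KL p q := by
          rw [KL]
          rw [Finset.sum_add_distrib, Finset.sum_sub_distrib, hp1, hq1]; ring
  calc (∑ x, |p x - q x|) ^ 2 = (∑ x, f x * g x) ^ 2 := by
        rw [Finset.sum_congr rfl fun x _ => (hfg x).symm]
    _ ≤ (∑ x, f x ^ 2) * ∑ x, g x ^ 2 := h1
    _ = 4 * ∑ x, f x ^ 2 := by rw [h2]; ring
    _ ≤ 4 * KL p q := by linarith

lemma log_sum_ineq {ι : Type*} (s : Finset ι) (hs : s.Nonempty) (p q : ι → ℝ)
    (hp : ∀ i ∈ s, 0 < p i) (hq : ∀ i ∈ s, 0 < q i) :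
    (∑ i ∈ s, p i) * Real.log ((∑ i ∈ s, p i) / (∑ i ∈ s, q i)) ≤
      ∑ i ∈ s, p i * Real.log (p i / q i) := by
  set Pp := ∑ i ∈ s, p i with hPp
  set Qq := ∑ i ∈ s, q i with hQq
  have hP : 0 < Pp := Finset.sum_pos hp hs
  have hQ : 0 < Qq := Finset.sum_pos hq hs
  have key : ∀ i ∈ s, p i * Real.log (Pp / Qq) ≤
      p i * Real.log (p i / q i) + (q i * (Pp / Qq) - p i) := by
    intro i hi
    have hpi := hp i hi; have hqi := hq i hi
    have h := Real.log_le_sub_one_of_pos (show (0:ℝ) < q i * Pp / (p i * Qq) by positivity)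
    have hlogeq : Real.log (q i * Pp / (p i * Qq)) =
        Real.log (Pp / Qq) - Real.log (p i / q i) := by
      rw [Real.log_div (by positivity) (by positivity),
        Real.log_div (by positivity) (by positivity),
        Real.log_div (by positivity) (by positivity),
        Real.log_mul (by positivity) (by positivity),
        Real.log_mul (by positivity) (by positivity)]
      ring
    rw [hlogeq] at h
    have h2 : p i * (Real.log (Pp / Qq) - Real.log (p i / q i)) ≤
        p i * (q i * Pp / (p i * Qq) - 1) := mul_le_mul_of_nonneg_left h hpi.le
    have h3 : p i * (q i * Pp / (p i * Qq) - 1) = q i * (Pp / Qq) - p i := by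
      field_simp
    nlinarith [h2, h3]
  have hsum := Finset.sum_le_sum key
  rw [← Finset.sum_mul] at hsum
  have h5 : ∑ i ∈ s, (q i * (Pp / Qq)) = Pp := by
    rw [← Finset.sum_mul, ← hQq]
    field_simp
  have h4 : ∑ i ∈ s, (p i * Real.log (p i / q i) + (q i * (Pp / Qq) - p i)) =
      ∑ i ∈ s, p i * Real.log (p i / q i) := by
    rw [Finset.sum_add_distrib, Finset.sum_sub_distrib, h5, ← hPp]
    ring
  rw [h4] at hsum
  exact hsum


end AuxAnalysis


lemma kl_mix {K : ℕ} [Fintype 𝒜] [Nonempty (Fin K)] (w wb : Fin K → ℝ)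
    (π πb : Fin K → 𝒜 → ℝ)
    (hw : ∀ j, 0 < w j) (hwb : ∀ j, 0 < wb j)
    (hπ : ∀ j a, 0 < π j a) (hπb : ∀ j a, 0 < πb j a)
    (hπ1 : ∀ j, ∑ a, π j a = 1) :
    KL (fun a => ∑ j, w j * π j a) (fun a => ∑ j, wb j * πb j a)
      ≤ KL w wb + ∑ j, w j * KL (π j) (πb j) := by
  have step1 : ∀ a : 𝒜,
      (∑ j, w j * π j a) * Real.log ((∑ j, w j * π j a) / (∑ j, wb j * πb j a))
        ≤ ∑ j, (w j * π j a) * Real.log ((w j * π j a) / (wb j * πb j a)) :=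
    fun a => log_sum_ineq Finset.univ Finset.univ_nonempty _ _
      (fun j _ => mul_pos (hw j) (hπ j a)) (fun j _ => mul_pos (hwb j) (hπb j a))
  have hlogsplit : ∀ (j : Fin K) (a : 𝒜),
      Real.log ((w j * π j a) / (wb j * πb j a))
        = Real.log (w j / wb j) + Real.log (π j a / πb j a) := by
    intro j a
    rw [← div_mul_div_comm]
    exact Real.log_mul (div_pos (hw j) (hwb j)).ne' (div_pos (hπ j a) (hπb j a)).ne'
  calc KL (fun a => ∑ j, w j * π j a) (fun a => ∑ j, wb j * πb j a)
      ≤ ∑ a, ∑ j, (w j * π j a) * Real.log ((w j * π j a) / (wb j * πb j a)) :=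
        Finset.sum_le_sum fun a _ => step1 a
    _ = ∑ j, ∑ a, (w j * π j a) * Real.log ((w j * π j a) / (wb j * πb j a)) :=
        Finset.sum_comm
    _ = ∑ j, (w j * Real.log (w j / wb j)
          + w j * ∑ a, π j a * Real.log (π j a / πb j a)) := by
        refine Finset.sum_congr rfl fun j _ => ?_
        have hsplit : ∀ a, (w j * π j a) * Real.log ((w j * π j a) / (wb j * πb j a))
            = (w j * Real.log (w j / wb j)) * π j a
              + w j * (π j a * Real.log (π j a / πb j a)) := by
          intro a; rw [hlogsplit j a]; ring
        rw [Finset.sum_congr rfl fun a _ => hsplit a]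
        rw [Finset.sum_add_distrib, ← Finset.mul_sum, hπ1 j, mul_one, ← Finset.mul_sum]
    _ = KL w wb + ∑ j, w j * KL (π j) (πb j) := by
        rw [Finset.sum_add_distrib]
        rfl

section Basic

variable [Fintype S] [Fintype 𝒜] [DecidableEq S]
variable {P : S → 𝒜 → S → ℝ} {r : S → 𝒜 → ℝ} {γ : ℝ} {μ : S → 𝒜 → ℝ} {d₀ : S → ℝ}

lemma dseq_nonneg (hP0 : ∀ s a s', 0 ≤ P s a s') (hμ0 : ∀ s a, 0 ≤ μ s a)
    (hd0 : ∀ s, 0 ≤ d₀ s) : ∀ t s, 0 ≤ dseq P μ d₀ t s := by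
  intro t
  induction t with
  | zero => exact hd0
  | succ t ih =>
    intro s'
    refine Finset.sum_nonneg fun s _ => Finset.sum_nonneg fun a _ => ?_
    exact mul_nonneg (mul_nonneg (ih s) (hμ0 s a)) (hP0 s a s')

lemma dseq_sum_one (hP1 : ∀ s a, ∑ s', P s a s' = 1) (hμ1 : ∀ s, ∑ a, μ s a = 1)
    (hd1 : ∑ s, d₀ s = 1) : ∀ t, ∑ s, dseq P μ d₀ t s = 1 := by
  intro t
  induction t with
  | zero => exact hd1
  | succ t ih =>
    show ∑ s', ∑ s, ∑ a, dseq P μ d₀ t s * μ s a * P s a s' = 1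
    rw [Finset.sum_comm]
    have : ∀ s, ∑ s', ∑ a, dseq P μ d₀ t s * μ s a * P s a s'
        = dseq P μ d₀ t s := by
      intro s
      rw [Finset.sum_comm]
      have : ∀ a, ∑ s', dseq P μ d₀ t s * μ s a * P s a s'
          = dseq P μ d₀ t s * μ s a := by
        intro a
        rw [← Finset.mul_sum, hP1 s a, mul_one]
      rw [Finset.sum_congr rfl fun a _ => this a, ← Finset.mul_sum, hμ1 s, mul_one]
    rw [Finset.sum_congr rfl fun s _ => this s, ih]

lemma summable_geom_bound {f : ℕ → ℝ} {M γ : ℝ} (hγ0 : 0 ≤ γ) (hγ1 : γ < 1)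
    (h : ∀ t, |f t| ≤ M * γ ^ t) : Summable f :=
  Summable.of_norm_bounded ((summable_geometric_of_lt_one hγ0 hγ1).mul_left M) h

/-- weighted average bound -/
lemma weighted_abs_le {d f : S → ℝ} {M : ℝ} (hd0 : ∀ s, 0 ≤ d s)
    (hd1 : ∑ s, d s = 1) (hf : ∀ s, |f s| ≤ M) : |∑ s, d s * f s| ≤ M := by
  calc |∑ s, d s * f s| ≤ ∑ s, |d s * f s| := Finset.abs_sum_le_sum_abs _ _
    _ ≤ ∑ s, d s * M := by
        refine Finset.sum_le_sum fun s _ => ?_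
        rw [abs_mul, abs_of_nonneg (hd0 s)]
        exact mul_le_mul_of_nonneg_left (hf s) (hd0 s)
    _ = M := by rw [← Finset.sum_mul, hd1, one_mul]

variable [Nonempty S] [Nonempty 𝒜]

/-- summability of discounted weighted sums along dseq -/
lemma summable_dseq_weight (hγ0 : 0 ≤ γ) (hγ1 : γ < 1)
    (hP0 : ∀ s a s', 0 ≤ P s a s') (hP1 : ∀ s a, ∑ s', P s a s' = 1)
    (hμ0 : ∀ s a, 0 ≤ μ s a) (hμ1 : ∀ s, ∑ a, μ s a = 1)
    (hd0 : ∀ s, 0 ≤ d₀ s) (hd1 : ∑ s, d₀ s = 1) (g : S → ℝ) :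
    Summable (fun t => γ ^ t * ∑ s, dseq P μ d₀ t s * g s) := by
  set M := Finset.univ.sup' Finset.univ_nonempty (fun s => |g s|) with hM
  refine summable_geom_bound (M := M) hγ0 hγ1 fun t => ?_
  rw [abs_mul, abs_pow, abs_of_nonneg hγ0, mul_comm]
  refine mul_le_mul_of_nonneg_right ?_ (pow_nonneg hγ0 t)
  exact weighted_abs_le (dseq_nonneg hP0 hμ0 hd0 t) (dseq_sum_one hP1 hμ1 hd1 t)
    (fun s => Finset.le_sup' (fun s => |g s|) (Finset.mem_univ s))

lemma dseq_eq_sum_dirac (P : S → 𝒜 → S → ℝ) (μ : S → 𝒜 → ℝ) (d : S → ℝ) :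
    ∀ (t : ℕ) (s : S), dseq P μ d t s
      = ∑ s₀, d s₀ * dseq P μ (fun s' => if s' = s₀ then 1 else 0) t s := by
  intro t
  induction t with
  | zero =>
    intro s
    show d s = ∑ s₀, d s₀ * (if s = s₀ then 1 else 0)
    rw [Finset.sum_congr rfl (fun s₀ _ => by rw [mul_ite, mul_one, mul_zero])]
    simp
  | succ t ih =>
    intro s'
    show (∑ s, ∑ a, dseq P μ d t s * μ s a * P s a s') = _
    have : ∀ s a, dseq P μ d t s * μ s a * P s a s'
        = ∑ s₀, d s₀ * (dseq P μ (fun x => if x = s₀ then 1 else 0) t s * μ s a * P s a s') := by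
      intro s a
      rw [ih s, Finset.sum_mul, Finset.sum_mul]
      exact Finset.sum_congr rfl fun s₀ _ => by ring
    calc (∑ s, ∑ a, dseq P μ d t s * μ s a * P s a s')
        = ∑ s, ∑ a, ∑ s₀, d s₀ * (dseq P μ (fun x => if x = s₀ then 1 else 0) t s * μ s a * P s a s') := by
          exact Finset.sum_congr rfl fun s _ => Finset.sum_congr rfl fun a _ => this s a
      _ = ∑ s, ∑ s₀, ∑ a, d s₀ * (dseq P μ (fun x => if x = s₀ then 1 else 0) t s * μ s a * P s a s') := Finset.sum_congr rfl fun s _ => Finset.sum_comm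
      _ = ∑ s₀, ∑ s, ∑ a, d s₀ * (dseq P μ (fun x => if x = s₀ then 1 else 0) t s * μ s a * P s a s') := Finset.sum_comm
      _ = ∑ s₀, d s₀ * ∑ s, ∑ a, dseq P μ (fun x => if x = s₀ then 1 else 0) t s * μ s a * P s a s' := by
          refine Finset.sum_congr rfl fun s₀ _ => ?_
          rw [Finset.mul_sum]
          exact Finset.sum_congr rfl fun s _ => (Finset.mul_sum _ _ _).symm
      _ = ∑ s₀, d s₀ * dseq P μ (fun x => if x = s₀ then 1 else 0) (t+1) s' := rfl


lemma Jret_eq (P : S → 𝒜 → S → ℝ) (r : S → 𝒜 → ℝ) (γ : ℝ) (μ : S → 𝒜 → ℝ) (d : S → ℝ) :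
    Jret P r γ μ d = ∑' t : ℕ, γ ^ t * ∑ s, dseq P μ d t s * ∑ a, μ s a * r s a := by
  unfold Jret
  refine tsum_congr fun t => ?_
  congr 1
  refine Finset.sum_congr rfl fun s _ => ?_
  rw [Finset.mul_sum]
  exact Finset.sum_congr rfl fun a _ => by ring

lemma Jret_eq_sum_V (hγ0 : 0 ≤ γ) (hγ1 : γ < 1)
    (hP0 : ∀ s a s', 0 ≤ P s a s') (hP1 : ∀ s a, ∑ s', P s a s' = 1)
    (hμ0 : ∀ s a, 0 ≤ μ s a) (hμ1 : ∀ s, ∑ a, μ s a = 1) (d : S → ℝ) :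
    Jret P r γ μ d = ∑ s₀, d s₀ * Vfun P r γ μ s₀ := by
  have hdirac0 : ∀ s₀ : S, ∀ s, (0:ℝ) ≤ if s = s₀ then 1 else 0 := by
    intro s₀ s; split <;> norm_num
  have hdirac1 : ∀ s₀ : S, ∑ s, (if s = s₀ then (1:ℝ) else 0) = 1 := by
    intro s₀; simp
  set g : S → ℝ := fun s => ∑ a, μ s a * r s a with hg
  have hsum : ∀ s₀ : S, Summable (fun t => d s₀ * (γ ^ t *
      ∑ s, dseq P μ (fun s' => if s' = s₀ then 1 else 0) t s * g s)) := by
    intro s₀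
    exact (summable_dseq_weight hγ0 hγ1 hP0 hP1 hμ0 hμ1 (hdirac0 s₀) (hdirac1 s₀) g).mul_left _
  rw [Jret_eq]
  have hterm : ∀ t : ℕ, γ ^ t * ∑ s, dseq P μ d t s * g s
      = ∑ s₀, d s₀ * (γ ^ t * ∑ s, dseq P μ (fun s' => if s' = s₀ then 1 else 0) t s * g s) := by
    intro t
    rw [Finset.sum_congr rfl fun s _ => by rw [dseq_eq_sum_dirac P μ d t s]]
    calc γ ^ t * ∑ s, (∑ s₀, d s₀ * dseq P μ (fun s' => if s' = s₀ then 1 else 0) t s) * g s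
        = γ ^ t * ∑ s, ∑ s₀, d s₀ * dseq P μ (fun s' => if s' = s₀ then 1 else 0) t s * g s := by
          rw [Finset.sum_congr rfl fun s _ => Finset.sum_mul _ _ _]
      _ = γ ^ t * ∑ s₀, ∑ s, d s₀ * dseq P μ (fun s' => if s' = s₀ then 1 else 0) t s * g s := by
          rw [Finset.sum_comm]
      _ = ∑ s₀, d s₀ * (γ ^ t * ∑ s, dseq P μ (fun s' => if s' = s₀ then 1 else 0) t s * g s) := by
          rw [Finset.mul_sum]
          refine Finset.sum_congr rfl fun s₀ _ => ?_
          rw [Finset.mul_sum, Finset.mul_sum, Finset.mul_sum]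
          refine (Finset.sum_congr rfl fun s _ => by ring)
  rw [tsum_congr hterm, Summable.tsum_finsetSum fun s₀ _ => hsum s₀]
  refine Finset.sum_congr rfl fun s₀ _ => ?_
  rw [tsum_mul_left]
  congr 1
  rw [Vfun, Jret_eq]

lemma dseq_succ_shift (P : S → 𝒜 → S → ℝ) (μ : S → 𝒜 → ℝ) (d : S → ℝ) :
    ∀ t, dseq P μ d (t + 1) = dseq P μ (dseq P μ d 1) t := by
  intro t
  induction t with
  | zero => rfl
  | succ t ih =>
    show (fun s' => ∑ s, ∑ a, dseq P μ d (t+1) s * μ s a * P s a s') = _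
    rw [ih]
    rfl

lemma bellman (hγ0 : 0 ≤ γ) (hγ1 : γ < 1)
    (hP0 : ∀ s a s', 0 ≤ P s a s') (hP1 : ∀ s a, ∑ s', P s a s' = 1)
    (hμ0 : ∀ s a, 0 ≤ μ s a) (hμ1 : ∀ s, ∑ a, μ s a = 1) (s : S) :
    Vfun P r γ μ s = ∑ a, μ s a * Qfun P r γ μ s a := by
  have hdirac0 : ∀ s', (0:ℝ) ≤ if s' = s then 1 else 0 := by
    intro s'; split <;> norm_num
  have hdirac1 : ∑ s', (if s' = s then (1:ℝ) else 0) = 1 := by simp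
  set g : S → ℝ := fun s' => ∑ a, μ s' a * r s' a with hg
  set dd : S → ℝ := fun s' => if s' = s then 1 else 0 with hdd
  have hsummable := summable_dseq_weight (d₀ := dd) hγ0 hγ1 hP0 hP1 hμ0 hμ1 hdirac0 hdirac1 g
  have h0 : Vfun P r γ μ s = (γ ^ 0 * ∑ s', dseq P μ dd 0 s' * g s')
      + ∑' t : ℕ, γ ^ (t+1) * ∑ s', dseq P μ dd (t+1) s' * g s' := by
    rw [Vfun, Jret_eq, Summable.tsum_eq_zero_add hsummable]
  have h1 : γ ^ 0 * ∑ s', dseq P μ dd 0 s' * g s' = g s := by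
    show (1:ℝ) * ∑ s', (if s' = s then (1:ℝ) else 0) * g s' = g s
    rw [one_mul]
    simp
  set d1 : S → ℝ := dseq P μ dd 1 with hd1
  have hd1eq : ∀ s', d1 s' = ∑ a, μ s a * P s a s' := by
    intro s'
    show ∑ s₀, ∑ a, dd s₀ * μ s₀ a * P s₀ a s' = _
    rw [hdd]
    simp [Finset.sum_ite_eq']
  have h2 : ∑' t : ℕ, γ ^ (t+1) * ∑ s', dseq P μ dd (t+1) s' * g s'
      = γ * Jret P r γ μ d1 := by
    rw [Jret_eq]
    rw [← tsum_mul_left]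
    refine tsum_congr fun t => ?_
    rw [dseq_succ_shift P μ dd t, ← hd1]
    ring
  have h3 : Jret P r γ μ d1 = ∑ s', d1 s' * Vfun P r γ μ s' :=
    Jret_eq_sum_V hγ0 hγ1 hP0 hP1 hμ0 hμ1 d1
  rw [h0, h1, h2, h3]
  have h4 : ∑ s', d1 s' * Vfun P r γ μ s'
      = ∑ a, μ s a * ∑ s', P s a s' * Vfun P r γ μ s' := by
    calc ∑ s', d1 s' * Vfun P r γ μ s'
        = ∑ s', ∑ a, μ s a * P s a s' * Vfun P r γ μ s' := by
          refine Finset.sum_congr rfl fun s' _ => ?_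
          rw [hd1eq s', Finset.sum_mul]
      _ = ∑ a, ∑ s', μ s a * P s a s' * Vfun P r γ μ s' := Finset.sum_comm
      _ = ∑ a, μ s a * ∑ s', P s a s' * Vfun P r γ μ s' := by
          refine Finset.sum_congr rfl fun a _ => ?_
          rw [Finset.mul_sum]
          exact Finset.sum_congr rfl fun s' _ => by ring
  rw [h4, hg]
  simp only [Qfun]
  rw [Finset.mul_sum, ← Finset.sum_add_distrib]
  refine Finset.sum_congr rfl fun a _ => by ring

lemma perf_diff {ν : S → 𝒜 → ℝ} (hγ0 : 0 ≤ γ) (hγ1 : γ < 1)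
    (hP0 : ∀ s a s', 0 ≤ P s a s') (hP1 : ∀ s a, ∑ s', P s a s' = 1)
    (hμ0 : ∀ s a, 0 ≤ μ s a) (hμ1 : ∀ s, ∑ a, μ s a = 1)
    (hν0 : ∀ s a, 0 ≤ ν s a) (hν1 : ∀ s, ∑ a, ν s a = 1)
    (hd0 : ∀ s, 0 ≤ d₀ s) (hd1 : ∑ s, d₀ s = 1) :
    Jret P r γ ν d₀ = Jret P r γ μ d₀ +
      ∑' t : ℕ, γ ^ t * ∑ s, dseq P ν d₀ t s *
        (∑ a, ν s a * Qfun P r γ μ s a - Vfun P r γ μ s) := by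
  set V : S → ℝ := Vfun P r γ μ with hV
  set A : S → ℝ := fun s => ∑ a, ν s a * Qfun P r γ μ s a - V s with hA
  set v : ℕ → ℝ := fun t => γ ^ t * ∑ s, dseq P ν d₀ t s * V s with hv
  have hvsum : Summable v := summable_dseq_weight hγ0 hγ1 hP0 hP1 hν0 hν1 hd0 hd1 V
  have hvsum' : Summable (fun t => v (t + 1)) := (summable_nat_add_iff 1).2 hvsum
  have hAsum : Summable (fun t => γ ^ t * ∑ s, dseq P ν d₀ t s * A s) :=
    summable_dseq_weight hγ0 hγ1 hP0 hP1 hν0 hν1 hd0 hd1 A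
  have step : ∀ t : ℕ, γ ^ t * ∑ s, dseq P ν d₀ t s * ∑ a, ν s a * r s a
      = γ ^ t * ∑ s, dseq P ν d₀ t s * A s + (v t - v (t + 1)) := by
    intro t
    set X : S → ℝ := fun s => ∑ a, ν s a * ∑ s', P s a s' * V s' with hX
    have hr : ∀ s, ∑ a, ν s a * r s a = A s + V s - γ * X s := by
      intro s
      rw [hA, hX]
      simp only [Qfun]
      rw [Finset.sum_congr rfl fun a _ => (by ring :
        ν s a * (r s a + γ * ∑ s', P s a s' * Vfun P r γ μ s')
          = ν s a * r s a + γ * (ν s a * ∑ s', P s a s' * Vfun P r γ μ s'))]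
      rw [Finset.sum_add_distrib, ← Finset.mul_sum]
      ring
    have hnext : ∑ s', dseq P ν d₀ (t+1) s' * V s'
        = ∑ s, dseq P ν d₀ t s * X s := by
      calc ∑ s', dseq P ν d₀ (t+1) s' * V s'
          = ∑ s', (∑ s, ∑ a, dseq P ν d₀ t s * ν s a * P s a s') * V s' := rfl
        _ = ∑ s', ∑ s, ∑ a, dseq P ν d₀ t s * ν s a * P s a s' * V s' := by
            refine Finset.sum_congr rfl fun s' _ => ?_
            rw [Finset.sum_mul]
            exact Finset.sum_congr rfl fun s _ => Finset.sum_mul _ _ _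
        _ = ∑ s, ∑ s', ∑ a, dseq P ν d₀ t s * ν s a * P s a s' * V s' := Finset.sum_comm
        _ = ∑ s, ∑ a, ∑ s', dseq P ν d₀ t s * ν s a * P s a s' * V s' :=
            Finset.sum_congr rfl fun s _ => Finset.sum_comm
        _ = ∑ s, dseq P ν d₀ t s * X s := by
            refine Finset.sum_congr rfl fun s _ => ?_
            rw [hX, Finset.mul_sum]
            refine Finset.sum_congr rfl fun a _ => ?_
            rw [Finset.mul_sum, Finset.mul_sum]
            exact Finset.sum_congr rfl fun s' _ => by ring
    have hvt : v t = γ ^ t * ∑ s, dseq P ν d₀ t s * V s := rfl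
    have hvt1 : v (t + 1) = γ ^ (t + 1) * ∑ s, dseq P ν d₀ t s * X s := by
      show γ ^ (t + 1) * ∑ s', dseq P ν d₀ (t+1) s' * V s' = _
      rw [hnext]
    have expand : ∑ s, dseq P ν d₀ t s * (A s + V s - γ * X s)
        = ∑ s, dseq P ν d₀ t s * A s + ∑ s, dseq P ν d₀ t s * V s
          - γ * ∑ s, dseq P ν d₀ t s * X s := by
      rw [Finset.mul_sum, ← Finset.sum_add_distrib, ← Finset.sum_sub_distrib]
      exact Finset.sum_congr rfl fun s _ => by ring
    rw [Finset.sum_congr rfl fun s _ => by rw [hr s]]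
    rw [expand, hvt, hvt1]
    ring
  have htele : ∑' t : ℕ, (v t - v (t + 1)) = v 0 := by
    rw [Summable.tsum_sub hvsum hvsum']
    have := Summable.tsum_eq_zero_add hvsum
    linarith
  have hv0 : v 0 = Jret P r γ μ d₀ := by
    rw [hv]
    show γ ^ 0 * ∑ s, dseq P ν d₀ 0 s * V s = _
    rw [pow_zero, one_mul]
    show ∑ s, d₀ s * V s = _
    rw [Jret_eq_sum_V hγ0 hγ1 hP0 hP1 hμ0 hμ1 d₀]
  calc Jret P r γ ν d₀
      = ∑' t : ℕ, γ ^ t * ∑ s, dseq P ν d₀ t s * ∑ a, ν s a * r s a := Jret_eq P r γ ν d₀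
    _ = ∑' t : ℕ, (γ ^ t * ∑ s, dseq P ν d₀ t s * A s + (v t - v (t + 1))) := tsum_congr step
    _ = (∑' t : ℕ, γ ^ t * ∑ s, dseq P ν d₀ t s * A s) + ∑' t : ℕ, (v t - v (t + 1)) :=
        Summable.tsum_add hAsum (hvsum.sub hvsum')
    _ = Jret P r γ μ d₀ + ∑' t : ℕ, γ ^ t * ∑ s, dseq P ν d₀ t s * A s := by
        rw [htele, hv0]; ring


lemma dseq_l1 {ν : S → 𝒜 → ℝ} {α : ℝ}
    (hP0 : ∀ s a s', 0 ≤ P s a s') (hP1 : ∀ s a, ∑ s', P s a s' = 1)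
    (hμ0 : ∀ s a, 0 ≤ μ s a) (hμ1 : ∀ s, ∑ a, μ s a = 1)
    (hν0 : ∀ s a, 0 ≤ ν s a) (hν1 : ∀ s, ∑ a, ν s a = 1)
    (hd0 : ∀ s, 0 ≤ d₀ s) (hd1 : ∑ s, d₀ s = 1)
    (hα : ∀ s, ∑ a, |ν s a - μ s a| ≤ α) :
    ∀ t, ∑ s, |dseq P ν d₀ t s - dseq P μ d₀ t s| ≤ α * t := by
  intro t
  induction t with
  | zero => simp [dseq]
  | succ t ih =>
    have key : ∀ s', |dseq P ν d₀ (t+1) s' - dseq P μ d₀ (t+1) s'|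
        ≤ ∑ s, ∑ a, (|dseq P ν d₀ t s - dseq P μ d₀ t s| * ν s a * P s a s'
            + dseq P μ d₀ t s * |ν s a - μ s a| * P s a s') := by
      intro s'
      have hdiff : dseq P ν d₀ (t+1) s' - dseq P μ d₀ (t+1) s'
          = ∑ s, ∑ a, ((dseq P ν d₀ t s - dseq P μ d₀ t s) * ν s a * P s a s'
              + dseq P μ d₀ t s * (ν s a - μ s a) * P s a s') := by
        show (∑ s, ∑ a, dseq P ν d₀ t s * ν s a * P s a s')
            - (∑ s, ∑ a, dseq P μ d₀ t s * μ s a * P s a s') = _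
        rw [← Finset.sum_sub_distrib]
        refine Finset.sum_congr rfl fun s _ => ?_
        rw [← Finset.sum_sub_distrib]
        exact Finset.sum_congr rfl fun a _ => by ring
      rw [hdiff]
      calc |∑ s, ∑ a, ((dseq P ν d₀ t s - dseq P μ d₀ t s) * ν s a * P s a s'
              + dseq P μ d₀ t s * (ν s a - μ s a) * P s a s')|
          ≤ ∑ s, |∑ a, ((dseq P ν d₀ t s - dseq P μ d₀ t s) * ν s a * P s a s'
              + dseq P μ d₀ t s * (ν s a - μ s a) * P s a s')| := Finset.abs_sum_le_sum_abs _ _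
        _ ≤ ∑ s, ∑ a, |(dseq P ν d₀ t s - dseq P μ d₀ t s) * ν s a * P s a s'
              + dseq P μ d₀ t s * (ν s a - μ s a) * P s a s'| :=
            Finset.sum_le_sum fun s _ => Finset.abs_sum_le_sum_abs _ _
        _ ≤ _ := by
            refine Finset.sum_le_sum fun s _ => Finset.sum_le_sum fun a _ => ?_
            calc |(dseq P ν d₀ t s - dseq P μ d₀ t s) * ν s a * P s a s'
                  + dseq P μ d₀ t s * (ν s a - μ s a) * P s a s'|
                ≤ |(dseq P ν d₀ t s - dseq P μ d₀ t s) * ν s a * P s a s'|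
                  + |dseq P μ d₀ t s * (ν s a - μ s a) * P s a s'| := abs_add_le _ _
              _ = |dseq P ν d₀ t s - dseq P μ d₀ t s| * ν s a * P s a s'
                  + dseq P μ d₀ t s * |ν s a - μ s a| * P s a s' := by
                  rw [abs_mul, abs_mul, abs_mul, abs_mul,
                    abs_of_nonneg (hν0 s a), abs_of_nonneg (hP0 s a s'),
                    abs_of_nonneg (dseq_nonneg hP0 hμ0 hd0 t s)]
    calc ∑ s', |dseq P ν d₀ (t+1) s' - dseq P μ d₀ (t+1) s'|
        ≤ ∑ s', ∑ s, ∑ a, (|dseq P ν d₀ t s - dseq P μ d₀ t s| * ν s a * P s a s'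
            + dseq P μ d₀ t s * |ν s a - μ s a| * P s a s') :=
          Finset.sum_le_sum fun s' _ => key s'
      _ = ∑ s, ∑ a, (|dseq P ν d₀ t s - dseq P μ d₀ t s| * ν s a
            + dseq P μ d₀ t s * |ν s a - μ s a|) := by
          rw [Finset.sum_comm]
          refine Finset.sum_congr rfl fun s _ => ?_
          rw [Finset.sum_comm]
          refine Finset.sum_congr rfl fun a _ => ?_
          rw [Finset.sum_add_distrib, ← Finset.mul_sum, ← Finset.mul_sum,
            hP1 s a, mul_one, mul_one]
      _ = (∑ s, |dseq P ν d₀ t s - dseq P μ d₀ t s|)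
            + ∑ s, dseq P μ d₀ t s * ∑ a, |ν s a - μ s a| := by
          rw [← Finset.sum_add_distrib]
          refine Finset.sum_congr rfl fun s _ => ?_
          rw [Finset.sum_add_distrib, ← Finset.mul_sum, ← Finset.mul_sum, hν1 s, mul_one]
      _ ≤ α * t + α := by
          have h2 : ∑ s, dseq P μ d₀ t s * ∑ a, |ν s a - μ s a| ≤ α := by
            have hb : ∀ s, dseq P μ d₀ t s * ∑ a, |ν s a - μ s a|
                ≤ dseq P μ d₀ t s * α :=
              fun s => mul_le_mul_of_nonneg_left (hα s) (dseq_nonneg hP0 hμ0 hd0 t s)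
            calc ∑ s, dseq P μ d₀ t s * ∑ a, |ν s a - μ s a|
                ≤ ∑ s, dseq P μ d₀ t s * α := Finset.sum_le_sum fun s _ => hb s
              _ = α := by rw [← Finset.sum_mul, dseq_sum_one hP1 hμ1 hd1 t, one_mul]
          linarith
      _ = α * ((t : ℝ) + 1) := by ring
      _ = α * ((t : ℕ) + 1 : ℕ) := by push_cast; ring


lemma dseq_le_one (hP0 : ∀ s a s', 0 ≤ P s a s') (hP1 : ∀ s a, ∑ s', P s a s' = 1)
    (hμ0 : ∀ s a, 0 ≤ μ s a) (hμ1 : ∀ s, ∑ a, μ s a = 1)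
    (hd0 : ∀ s, 0 ≤ d₀ s) (hd1 : ∑ s, d₀ s = 1) (t : ℕ) (s : S) :
    dseq P μ d₀ t s ≤ 1 := by
  have h := dseq_sum_one (P := P) (μ := μ) (d₀ := d₀) hP1 hμ1 hd1 t
  have h2 := Finset.single_le_sum (f := fun s => dseq P μ d₀ t s)
    (fun s _ => dseq_nonneg hP0 hμ0 hd0 t s) (Finset.mem_univ s)
  linarith

lemma summable_rho_term (hγ0 : 0 ≤ γ) (hγ1 : γ < 1)
    (hP0 : ∀ s a s', 0 ≤ P s a s') (hP1 : ∀ s a, ∑ s', P s a s' = 1)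
    (hμ0 : ∀ s a, 0 ≤ μ s a) (hμ1 : ∀ s, ∑ a, μ s a = 1)
    (hd0 : ∀ s, 0 ≤ d₀ s) (hd1 : ∑ s, d₀ s = 1) (g : S → ℝ) (s : S) :
    Summable (fun t => γ ^ t * dseq P μ d₀ t s * g s) := by
  refine summable_geom_bound (M := |g s|) hγ0 hγ1 fun t => ?_
  rw [abs_mul, abs_mul, abs_pow, abs_of_nonneg hγ0,
    abs_of_nonneg (dseq_nonneg hP0 hμ0 hd0 t s)]
  have h1 := dseq_le_one hP0 hP1 hμ0 hμ1 hd0 hd1 t s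
  have h3 : (0:ℝ) ≤ γ ^ t := pow_nonneg hγ0 t
  calc γ ^ t * dseq P μ d₀ t s * |g s|
      ≤ γ ^ t * 1 * |g s| :=
        mul_le_mul_of_nonneg_right (mul_le_mul_of_nonneg_left h1 h3) (abs_nonneg _)
    _ = |g s| * γ ^ t := by ring

lemma rho_weighted (hγ0 : 0 ≤ γ) (hγ1 : γ < 1)
    (hP0 : ∀ s a s', 0 ≤ P s a s') (hP1 : ∀ s a, ∑ s', P s a s' = 1)
    (hμ0 : ∀ s a, 0 ≤ μ s a) (hμ1 : ∀ s, ∑ a, μ s a = 1)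
    (hd0 : ∀ s, 0 ≤ d₀ s) (hd1 : ∑ s, d₀ s = 1) (g : S → ℝ) :
    ∑ s, rho P μ d₀ γ s * g s = ∑' t : ℕ, γ ^ t * ∑ s, dseq P μ d₀ t s * g s := by
  calc ∑ s, rho P μ d₀ γ s * g s
      = ∑ s, ∑' t : ℕ, γ ^ t * dseq P μ d₀ t s * g s := by
        refine Finset.sum_congr rfl fun s _ => ?_
        rw [rho, ← tsum_mul_right]
    _ = ∑' t : ℕ, ∑ s, γ ^ t * dseq P μ d₀ t s * g s :=
        (Summable.tsum_finsetSum fun s _ => summable_rho_term hγ0 hγ1 hP0 hP1 hμ0 hμ1 hd0 hd1 g s).symm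
    _ = ∑' t : ℕ, γ ^ t * ∑ s, dseq P μ d₀ t s * g s := by
        refine tsum_congr fun t => ?_
        rw [Finset.mul_sum]
        exact Finset.sum_congr rfl fun s _ => by ring

lemma sum_rho (hγ0 : 0 ≤ γ) (hγ1 : γ < 1)
    (hP0 : ∀ s a s', 0 ≤ P s a s') (hP1 : ∀ s a, ∑ s', P s a s' = 1)
    (hμ0 : ∀ s a, 0 ≤ μ s a) (hμ1 : ∀ s, ∑ a, μ s a = 1)
    (hd0 : ∀ s, 0 ≤ d₀ s) (hd1 : ∑ s, d₀ s = 1) :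
    ∑ s, rho P μ d₀ γ s = (1 - γ)⁻¹ := by
  have h := rho_weighted hγ0 hγ1 hP0 hP1 hμ0 hμ1 hd0 hd1 (fun _ => (1:ℝ))
  simp only [mul_one] at h
  rw [h, tsum_congr fun t => by rw [dseq_sum_one hP1 hμ1 hd1 t, mul_one]]
  exact tsum_geometric_of_lt_one hγ0 hγ1

end Basic

/-- (Conductor-based policy improvement inequality, Theorem 1 of HCPO.)
For conductor-based policies `(w, π)` and `(wb, πb)` with induced joint
policies `μ` and `μb`, the return of `μb` is lower-bounded by the return of
`μ` plus the discounted-visitation-weighted sum of the conductor advantage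
and the conditional action advantage, penalized by the maximal KL divergences
of the conductor policies and of the instruction-conditional policies. -/
theorem conductor_policy_improvement
    [Fintype S] [Fintype 𝒜] [Nonempty S] [Nonempty 𝒜] [DecidableEq S]
    (P : S → 𝒜 → S → ℝ) (r : S → 𝒜 → ℝ) (γ : ℝ)
    (hγ0 : 0 ≤ γ) (hγ1 : γ < 1)
    (hP0 : ∀ s a s', 0 ≤ P s a s') (hP1 : ∀ s a, ∑ s', P s a s' = 1)
    (d₀ : S → ℝ) (hd0 : ∀ s, 0 ≤ d₀ s) (hd1 : ∑ s, d₀ s = 1)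
    (K : ℕ) (hK : 1 ≤ K)
    (w wb : S → Fin K → ℝ) (π πb : Fin K → S → 𝒜 → ℝ)
    (hw : ∀ s j, 0 < w s j) (hw1 : ∀ s, ∑ j, w s j = 1)
    (hwb : ∀ s j, 0 < wb s j) (hwb1 : ∀ s, ∑ j, wb s j = 1)
    (hπ : ∀ j s a, 0 < π j s a) (hπ1 : ∀ j s, ∑ a, π j s a = 1)
    (hπb : ∀ j s a, 0 < πb j s a) (hπb1 : ∀ j s, ∑ a, πb j s a = 1)
    (μ μb : S → 𝒜 → ℝ)
    (hμ : μ = fun s a => ∑ j, w s j * π j s a)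
    (hμb : μb = fun s a => ∑ j, wb s j * πb j s a)
    (C : ℝ)
    (hC : C = 4 * γ * (Finset.univ.sup' Finset.univ_nonempty
        fun p : S × 𝒜 => |Adv P r γ μ p.1 p.2|) / (1 - γ) ^ 2) :
    Jret P r γ μb d₀ ≥ Jret P r γ μ d₀ +
      ∑ s, rho P μ d₀ γ s *
        ((∑ j, wb s j *
            ((∑ a, π j s a * Qfun P r γ μ s a) - Vfun P r γ μ s))
          - C * (Finset.univ.sup' Finset.univ_nonempty
              fun s' => KL (w s') (wb s'))
          + (∑ j, wb s j * ∑ a, πb j s a *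
              (Qfun P r γ μ s a - ∑ a', π j s a' * Qfun P r γ μ s a'))
          - C * (Finset.univ.sup' Finset.univ_nonempty
              fun s' => ∑ j, w s' j * KL (π j s') (πb j s'))) := by
  haveI : Nonempty (Fin K) := ⟨⟨0, hK⟩⟩
  set ε := (Finset.univ.sup' Finset.univ_nonempty
      fun p : S × 𝒜 => |Adv P r γ μ p.1 p.2|) with hεdef
  set Kw := (Finset.univ.sup' Finset.univ_nonempty
      fun s' : S => KL (w s') (wb s')) with hKwdef
  set Kπ := (Finset.univ.sup' Finset.univ_nonempty
      fun s' : S => ∑ j, w s' j * KL (π j s') (πb j s')) with hKπdef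
  have hγpos : (0:ℝ) < 1 - γ := by linarith
  -- stochasticity of μ and μb
  have hμpos : ∀ s a, 0 < μ s a := by
    intro s a; rw [hμ]
    exact Finset.sum_pos (fun j _ => mul_pos (hw s j) (hπ j s a)) Finset.univ_nonempty
  have hμbpos : ∀ s a, 0 < μb s a := by
    intro s a; rw [hμb]
    exact Finset.sum_pos (fun j _ => mul_pos (hwb s j) (hπb j s a)) Finset.univ_nonempty
  have hμ0 : ∀ s a, 0 ≤ μ s a := fun s a => (hμpos s a).le
  have hμb0 : ∀ s a, 0 ≤ μb s a := fun s a => (hμbpos s a).le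
  have hμ1 : ∀ s, ∑ a, μ s a = 1 := by
    intro s; rw [hμ]
    rw [Finset.sum_comm, Finset.sum_congr rfl fun j (_ : j ∈ Finset.univ) => by
      rw [← Finset.mul_sum, hπ1 j s, mul_one]]
    exact hw1 s
  have hμb1 : ∀ s, ∑ a, μb s a = 1 := by
    intro s; rw [hμb]
    rw [Finset.sum_comm, Finset.sum_congr rfl fun j (_ : j ∈ Finset.univ) => by
      rw [← Finset.mul_sum, hπb1 j s, mul_one]]
    exact hwb1 s
  -- the maximal L1 discrepancy
  set αv := (Finset.univ.sup' Finset.univ_nonempty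
      fun s : S => ∑ a, |μb s a - μ s a|) with hαvdef
  have hαb : ∀ s, ∑ a, |μb s a - μ s a| ≤ αv :=
    fun s => Finset.le_sup' (fun s : S => ∑ a, |μb s a - μ s a|) (Finset.mem_univ s)
  have hαnn : 0 ≤ αv :=
    le_trans (Finset.sum_nonneg fun a _ => abs_nonneg _) (hαb (Classical.arbitrary S))
  have hAdv : ∀ s a, |Qfun P r γ μ s a - Vfun P r γ μ s| ≤ ε := fun s a =>
    Finset.le_sup' (fun p : S × 𝒜 => |Adv P r γ μ p.1 p.2|) (Finset.mem_univ (s, a))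
  have hεnn : 0 ≤ ε :=
    le_trans (abs_nonneg _) (hAdv (Classical.arbitrary S) (Classical.arbitrary 𝒜))
  -- advantage bound
  have hAbound : ∀ s, |∑ a, μb s a * Qfun P r γ μ s a - Vfun P r γ μ s| ≤ ε * αv := by
    intro s
    have hVb : Vfun P r γ μ s = ∑ a, μ s a * Qfun P r γ μ s a :=
      bellman hγ0 hγ1 hP0 hP1 hμ0 hμ1 s
    have hrepr : ∑ a, μb s a * Qfun P r γ μ s a - Vfun P r γ μ s
        = ∑ a, (μb s a - μ s a) * (Qfun P r γ μ s a - Vfun P r γ μ s) := by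
      have hexp : ∑ a, (μb s a - μ s a) * (Qfun P r γ μ s a - Vfun P r γ μ s)
          = ∑ a, μb s a * Qfun P r γ μ s a - ∑ a, μ s a * Qfun P r γ μ s a
            - (∑ a, μb s a) * Vfun P r γ μ s + (∑ a, μ s a) * Vfun P r γ μ s := by
        rw [Finset.sum_mul, Finset.sum_mul, ← Finset.sum_sub_distrib,
          ← Finset.sum_sub_distrib, ← Finset.sum_add_distrib]
        exact Finset.sum_congr rfl fun a _ => by ring
      rw [hexp, hμ1 s, hμb1 s, ← hVb]
      ring
    calc |∑ a, μb s a * Qfun P r γ μ s a - Vfun P r γ μ s|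
        = |∑ a, (μb s a - μ s a) * (Qfun P r γ μ s a - Vfun P r γ μ s)| := by rw [hrepr]
      _ ≤ ∑ a, |(μb s a - μ s a) * (Qfun P r γ μ s a - Vfun P r γ μ s)| :=
          Finset.abs_sum_le_sum_abs _ _
      _ ≤ ∑ a, |μb s a - μ s a| * ε := by
          refine Finset.sum_le_sum fun a _ => ?_
          rw [abs_mul]
          exact mul_le_mul_of_nonneg_left (hAdv s a) (abs_nonneg _)
      _ = (∑ a, |μb s a - μ s a|) * ε := (Finset.sum_mul _ _ _).symm
      _ ≤ αv * ε := mul_le_mul_of_nonneg_right (hαb s) hεnn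
      _ = ε * αv := mul_comm _ _
  -- performance difference
  have hperf : Jret P r γ μb d₀ = Jret P r γ μ d₀ +
      ∑' t : ℕ, γ ^ t * ∑ s, dseq P μb d₀ t s *
        (∑ a, μb s a * Qfun P r γ μ s a - Vfun P r γ μ s) :=
    perf_diff hγ0 hγ1 hP0 hP1 hμ0 hμ1 hμb0 hμb1 hd0 hd1
  -- rho-weighted surrogate
  have hR : ∑ s, rho P μ d₀ γ s * (∑ a, μb s a * Qfun P r γ μ s a - Vfun P r γ μ s)
      = ∑' t : ℕ, γ ^ t * ∑ s, dseq P μ d₀ t s *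
          (∑ a, μb s a * Qfun P r γ μ s a - Vfun P r γ μ s) :=
    rho_weighted hγ0 hγ1 hP0 hP1 hμ0 hμ1 hd0 hd1 _
  have hsum_rho : ∑ s, rho P μ d₀ γ s = (1 - γ)⁻¹ :=
    sum_rho hγ0 hγ1 hP0 hP1 hμ0 hμ1 hd0 hd1
  -- summability
  have hsT : Summable (fun t => γ ^ t * ∑ s, dseq P μb d₀ t s *
      (∑ a, μb s a * Qfun P r γ μ s a - Vfun P r γ μ s)) :=
    summable_dseq_weight hγ0 hγ1 hP0 hP1 hμb0 hμb1 hd0 hd1 _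
  have hsR : Summable (fun t => γ ^ t * ∑ s, dseq P μ d₀ t s *
      (∑ a, μb s a * Qfun P r γ μ s a - Vfun P r γ μ s)) :=
    summable_dseq_weight hγ0 hγ1 hP0 hP1 hμ0 hμ1 hd0 hd1 _
  have hnormγ : ‖γ‖ < 1 := by rw [Real.norm_eq_abs, abs_of_nonneg hγ0]; exact hγ1
  have hsb : Summable (fun t : ℕ => ε * αv ^ 2 * ((t : ℝ) * γ ^ t)) := by
    have h := summable_pow_mul_geometric_of_norm_lt_one (R := ℝ) 1 hnormγ
    simp only [pow_one] at h
    exact h.mul_left _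
  -- the error term bound
  have hl1 := dseq_l1 (ν := μb) hP0 hP1 hμ0 hμ1 hμb0 hμb1 hd0 hd1 hαb
  have hbnd : ∀ t : ℕ, |γ ^ t * ∑ s, (dseq P μb d₀ t s - dseq P μ d₀ t s) *
      (∑ a, μb s a * Qfun P r γ μ s a - Vfun P r γ μ s)|
      ≤ ε * αv ^ 2 * ((t : ℝ) * γ ^ t) := by
    intro t
    rw [abs_mul, abs_pow, abs_of_nonneg hγ0]
    have hin : |∑ s, (dseq P μb d₀ t s - dseq P μ d₀ t s) *
        (∑ a, μb s a * Qfun P r γ μ s a - Vfun P r γ μ s)| ≤ (αv * t) * (ε * αv) := by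
      calc |∑ s, (dseq P μb d₀ t s - dseq P μ d₀ t s) *
            (∑ a, μb s a * Qfun P r γ μ s a - Vfun P r γ μ s)|
          ≤ ∑ s, |(dseq P μb d₀ t s - dseq P μ d₀ t s) *
            (∑ a, μb s a * Qfun P r γ μ s a - Vfun P r γ μ s)| := Finset.abs_sum_le_sum_abs _ _
        _ ≤ ∑ s, |dseq P μb d₀ t s - dseq P μ d₀ t s| * (ε * αv) := by
            refine Finset.sum_le_sum fun s _ => ?_
            rw [abs_mul]
            exact mul_le_mul_of_nonneg_left (hAbound s) (abs_nonneg _)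
        _ = (∑ s, |dseq P μb d₀ t s - dseq P μ d₀ t s|) * (ε * αv) :=
            (Finset.sum_mul _ _ _).symm
        _ ≤ (αv * t) * (ε * αv) :=
            mul_le_mul_of_nonneg_right (hl1 t) (mul_nonneg hεnn hαnn)
    calc γ ^ t * |∑ s, (dseq P μb d₀ t s - dseq P μ d₀ t s) *
          (∑ a, μb s a * Qfun P r γ μ s a - Vfun P r γ μ s)|
        ≤ γ ^ t * ((αv * t) * (ε * αv)) :=
          mul_le_mul_of_nonneg_left hin (pow_nonneg hγ0 t)
      _ = ε * αv ^ 2 * ((t : ℝ) * γ ^ t) := by ring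
  have hf : Summable (fun t => γ ^ t * ∑ s, (dseq P μb d₀ t s - dseq P μ d₀ t s) *
      (∑ a, μb s a * Qfun P r γ μ s a - Vfun P r γ μ s)) := by
    refine Summable.of_norm_bounded hsb fun t => ?_
    rw [Real.norm_eq_abs]
    exact hbnd t
  have hdiff : ∀ t : ℕ, γ ^ t * ∑ s, dseq P μb d₀ t s *
        (∑ a, μb s a * Qfun P r γ μ s a - Vfun P r γ μ s)
      - γ ^ t * ∑ s, dseq P μ d₀ t s *
        (∑ a, μb s a * Qfun P r γ μ s a - Vfun P r γ μ s)
      = γ ^ t * ∑ s, (dseq P μb d₀ t s - dseq P μ d₀ t s) *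
        (∑ a, μb s a * Qfun P r γ μ s a - Vfun P r γ μ s) := by
    intro t
    rw [← mul_sub, ← Finset.sum_sub_distrib]
    congr 1
    exact Finset.sum_congr rfl fun s _ => by ring
  have htv : ∑' t : ℕ, ε * αv ^ 2 * ((t : ℝ) * γ ^ t) = ε * αv ^ 2 * (γ / (1 - γ) ^ 2) := by
    rw [tsum_mul_left, tsum_coe_mul_geometric_of_norm_lt_one hnormγ]
  have hE3 : (∑' t : ℕ, γ ^ t * ∑ s, dseq P μb d₀ t s *
        (∑ a, μb s a * Qfun P r γ μ s a - Vfun P r γ μ s))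
      - (∑' t : ℕ, γ ^ t * ∑ s, dseq P μ d₀ t s *
        (∑ a, μb s a * Qfun P r γ μ s a - Vfun P r γ μ s))
      ≥ -(ε * αv ^ 2 * (γ / (1 - γ) ^ 2)) := by
    have hle : ∀ t : ℕ, -(ε * αv ^ 2 * ((t : ℝ) * γ ^ t))
        ≤ γ ^ t * ∑ s, (dseq P μb d₀ t s - dseq P μ d₀ t s) *
          (∑ a, μb s a * Qfun P r γ μ s a - Vfun P r γ μ s) :=
      fun t => (abs_le.mp (hbnd t)).1
    have h := Summable.tsum_le_tsum hle hsb.neg hf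
    rw [tsum_neg, htv] at h
    calc (∑' t : ℕ, γ ^ t * ∑ s, dseq P μb d₀ t s *
          (∑ a, μb s a * Qfun P r γ μ s a - Vfun P r γ μ s))
        - (∑' t : ℕ, γ ^ t * ∑ s, dseq P μ d₀ t s *
          (∑ a, μb s a * Qfun P r γ μ s a - Vfun P r γ μ s))
        = ∑' t : ℕ, (γ ^ t * ∑ s, dseq P μb d₀ t s *
            (∑ a, μb s a * Qfun P r γ μ s a - Vfun P r γ μ s)
          - γ ^ t * ∑ s, dseq P μ d₀ t s *
            (∑ a, μb s a * Qfun P r γ μ s a - Vfun P r γ μ s)) := (Summable.tsum_sub hsT hsR).symm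
      _ = ∑' t : ℕ, γ ^ t * ∑ s, (dseq P μb d₀ t s - dseq P μ d₀ t s) *
            (∑ a, μb s a * Qfun P r γ μ s a - Vfun P r γ μ s) := tsum_congr hdiff
      _ ≥ -(ε * αv ^ 2 * (γ / (1 - γ) ^ 2)) := h
  -- Pinsker + chain rule
  have hα2 : αv ^ 2 ≤ 4 * (Kw + Kπ) := by
    obtain ⟨s0, -, hs0⟩ := Finset.exists_mem_eq_sup' (Finset.univ_nonempty (α := S))
      (fun s : S => ∑ a, |μb s a - μ s a|)
    have hcomm : ∑ a, |μb s0 a - μ s0 a| = ∑ a, |μ s0 a - μb s0 a| :=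
      Finset.sum_congr rfl fun a _ => abs_sub_comm _ _
    have hp := pinsker (μ s0) (μb s0) (hμpos s0) (hμbpos s0) (hμ1 s0) (hμb1 s0)
    have hklm : KL (μ s0) (μb s0) ≤ KL (w s0) (wb s0)
        + ∑ j, w s0 j * KL (π j s0) (πb j s0) := by
      have h := kl_mix (w s0) (wb s0) (fun j => π j s0) (fun j => πb j s0)
        (hw s0) (hwb s0) (fun j a => hπ j s0 a) (fun j a => hπb j s0 a) (fun j => hπ1 j s0)
      have e1 : μ s0 = fun a => ∑ j, w s0 j * π j s0 a := by rw [hμ]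
      have e2 : μb s0 = fun a => ∑ j, wb s0 j * πb j s0 a := by rw [hμb]
      rw [e1, e2]
      exact h
    have h1 : KL (w s0) (wb s0) ≤ Kw :=
      Finset.le_sup' (fun s' : S => KL (w s') (wb s')) (Finset.mem_univ s0)
    have h2 : ∑ j, w s0 j * KL (π j s0) (πb j s0) ≤ Kπ :=
      Finset.le_sup' (fun s' : S => ∑ j, w s' j * KL (π j s') (πb j s')) (Finset.mem_univ s0)
    calc αv ^ 2 = (∑ a, |μ s0 a - μb s0 a|) ^ 2 := by rw [hαvdef, hs0, hcomm]
      _ ≤ 4 * KL (μ s0) (μb s0) := hp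
      _ ≤ 4 * (Kw + Kπ) := by linarith
  have hKsum_nn : 0 ≤ Kw + Kπ := by nlinarith [sq_nonneg αv]
  have hCnn : 0 ≤ C := by
    rw [hC]
    have h4 : (0:ℝ) ≤ 4 * γ * ε := by positivity
    positivity
  have hE4 : ε * αv ^ 2 * (γ / (1 - γ) ^ 2) ≤ C * (Kw + Kπ) := by
    rw [hC]
    have hnn : 0 ≤ ε * (γ / (1 - γ) ^ 2) :=
      mul_nonneg hεnn (div_nonneg hγ0 (by positivity))
    calc ε * αv ^ 2 * (γ / (1 - γ) ^ 2) = ε * (γ / (1 - γ) ^ 2) * αv ^ 2 := by ring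
      _ ≤ ε * (γ / (1 - γ) ^ 2) * (4 * (Kw + Kπ)) := mul_le_mul_of_nonneg_left hα2 hnn
      _ = 4 * γ * ε / (1 - γ) ^ 2 * (Kw + Kπ) := by ring
  have hinv1 : (1:ℝ) ≤ (1 - γ)⁻¹ := by
    nlinarith [mul_inv_cancel₀ hγpos.ne', inv_nonneg.2 hγpos.le, hγ0]
  have hE5 : C * (Kw + Kπ) ≤ C * (Kw + Kπ) * (1 - γ)⁻¹ := by
    nlinarith [mul_nonneg hCnn hKsum_nn]
  -- rewrite the goal's bracket
  have hbr : ∀ s : S, ((∑ j, wb s j *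
          ((∑ a, π j s a * Qfun P r γ μ s a) - Vfun P r γ μ s))
        - C * Kw
        + (∑ j, wb s j * ∑ a, πb j s a *
            (Qfun P r γ μ s a - ∑ a', π j s a' * Qfun P r γ μ s a'))
        - C * Kπ)
      = (∑ a, μb s a * Qfun P r γ μ s a - Vfun P r γ μ s) - C * (Kw + Kπ) := by
    intro s
    have h1 : ∑ j, wb s j * ((∑ a, π j s a * Qfun P r γ μ s a) - Vfun P r γ μ s)
        = ∑ j, wb s j * ∑ a, π j s a * Qfun P r γ μ s a - Vfun P r γ μ s := by
      rw [Finset.sum_congr rfl fun j (_ : j ∈ Finset.univ) => mul_sub (wb s j) _ _,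
        Finset.sum_sub_distrib, ← Finset.sum_mul, hwb1 s, one_mul]
    have h2 : ∀ j, ∑ a, πb j s a * (Qfun P r γ μ s a - ∑ a', π j s a' * Qfun P r γ μ s a')
        = ∑ a, πb j s a * Qfun P r γ μ s a - ∑ a', π j s a' * Qfun P r γ μ s a' := by
      intro j
      rw [Finset.sum_congr rfl fun a (_ : a ∈ Finset.univ) => mul_sub (πb j s a) _ _,
        Finset.sum_sub_distrib, ← Finset.sum_mul, hπb1 j s, one_mul]
    have h3 : ∑ j, wb s j * (∑ a, πb j s a * Qfun P r γ μ s a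
          - ∑ a', π j s a' * Qfun P r γ μ s a')
        = ∑ j, wb s j * ∑ a, πb j s a * Qfun P r γ μ s a
          - ∑ j, wb s j * ∑ a', π j s a' * Qfun P r γ μ s a' := by
      rw [Finset.sum_congr rfl fun j (_ : j ∈ Finset.univ) => mul_sub (wb s j) _ _,
        Finset.sum_sub_distrib]
    have h4 : ∑ a, μb s a * Qfun P r γ μ s a
        = ∑ j, wb s j * ∑ a, πb j s a * Qfun P r γ μ s a := by
      rw [hμb]
      calc ∑ a, (∑ j, wb s j * πb j s a) * Qfun P r γ μ s a
          = ∑ a, ∑ j, wb s j * πb j s a * Qfun P r γ μ s a :=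
            Finset.sum_congr rfl fun a _ => Finset.sum_mul _ _ _
        _ = ∑ j, ∑ a, wb s j * πb j s a * Qfun P r γ μ s a := Finset.sum_comm
        _ = ∑ j, wb s j * ∑ a, πb j s a * Qfun P r γ μ s a := by
            refine Finset.sum_congr rfl fun j _ => ?_
            rw [Finset.mul_sum]
            exact Finset.sum_congr rfl fun a _ => by ring
    have h2' : ∑ j, wb s j * ∑ a, πb j s a *
          (Qfun P r γ μ s a - ∑ a', π j s a' * Qfun P r γ μ s a')
        = ∑ j, wb s j * (∑ a, πb j s a * Qfun P r γ μ s a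
            - ∑ a', π j s a' * Qfun P r γ μ s a') :=
      Finset.sum_congr rfl fun j _ => by rw [h2 j]
    rw [h1, h2', h3, h4]
    ring
  have hgoal_sum : ∑ s, rho P μ d₀ γ s *
      ((∑ j, wb s j * ((∑ a, π j s a * Qfun P r γ μ s a) - Vfun P r γ μ s))
        - C * Kw
        + (∑ j, wb s j * ∑ a, πb j s a *
            (Qfun P r γ μ s a - ∑ a', π j s a' * Qfun P r γ μ s a'))
        - C * Kπ)
      = ∑ s, rho P μ d₀ γ s * (∑ a, μb s a * Qfun P r γ μ s a - Vfun P r γ μ s)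
        - C * (Kw + Kπ) * ∑ s, rho P μ d₀ γ s := by
    rw [Finset.sum_congr rfl fun s (_ : s ∈ Finset.univ) => by rw [hbr s]]
    rw [Finset.sum_congr rfl fun s (_ : s ∈ Finset.univ) =>
      mul_sub (rho P μ d₀ γ s) _ (C * (Kw + Kπ))]
    rw [Finset.sum_sub_distrib]
    congr 1
    rw [Finset.mul_sum]
    exact Finset.sum_congr rfl fun s _ => by ring
  have hfin : C * (Kw + Kπ) * ∑ s, rho P μ d₀ γ s = C * (Kw + Kπ) * (1 - γ)⁻¹ := by
    rw [hsum_rho]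
  rw [ge_iff_le, hgoal_sum, hperf, hR, hfin]
  linarith [hE3, hE4, hE5]

end
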